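/- Let A be an m×m complex matrix that is strictly dissipative, i.e., its imaginary part Im(A) = (A - A*)/(2i) is a positive-definite Hermitian matrix (here A need not itself be Hermitian, but assume A is symmetric as a complex matrix). Then |det(A)| ≥ det(Im(A)). In particular, if Im(A) ≥ c·I for some c > 0, then |det(A)| ≥ c^m. -/

import Mathlib

open Matrix

/-- A real Hermitian matrix with `H - c•1` positive semidefinite (`c ≥ 0`) has `det H ≥ c^m`. -/
lemma aux_det_ge {m : ℕ} {H : Matrix (Fin m) (Fin m) ℝ} (hH : H.IsHermitian) {c : ℝ}
    (hc : 0 ≤ c) (h : (H - c • 1).PosSemidef) : c ^ m ≤ H.det := by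
  have key : ∀ i, c ≤ hH.eigenvalues i := by
    intro i
    have hv := h.dotProduct_mulVec_nonneg ⇑(hH.eigenvectorBasis i)
    have hnorm : dotProduct (star ⇑(hH.eigenvectorBasis i)) ⇑(hH.eigenvectorBasis i)
        = 1 := by
      rw [dotProduct_comm, ← EuclideanSpace.inner_eq_star_dotProduct, real_inner_self_eq_norm_sq,
        hH.eigenvectorBasis.orthonormal.1 i]
      norm_num
    rw [sub_mulVec, smul_mulVec, one_mulVec, dotProduct_sub, dotProduct_smul,
      hnorm] at hv
    have heig := hH.eigenvalues_eq i
    simp only [RCLike.re_to_real] at heig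
    rw [heig]
    simp only [smul_eq_mul, mul_one] at hv
    linarith
  rw [hH.det_eq_prod_eigenvalues]
  calc c ^ m = ∏ _i : Fin m, c := by simp
    _ ≤ ∏ i, hH.eigenvalues i := Finset.prod_le_prod (fun _ _ => hc) (fun i _ => key i)
    _ = ∏ i, (hH.eigenvalues i : ℝ) := by norm_num

/-- A complex symmetric matrix whose (entrywise) imaginary part is positive definite
(a "strictly dissipative" symmetric matrix) satisfies `|det A| ≥ det (Im A)`;
in particular `Im A ≥ c·I` with `c > 0` forces `|det A| ≥ c^m`. -/
theorem stmt_1 {m : ℕ} (A : Matrix (Fin m) (Fin m) ℂ) (hsymm : Aᵀ = A)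
    (hpd : (Matrix.of fun i j => (A i j).im : Matrix (Fin m) (Fin m) ℝ).PosDef) :
    (Matrix.of fun i j => (A i j).im : Matrix (Fin m) (Fin m) ℝ).det ≤ ‖A.det‖ ∧
      ∀ c : ℝ, 0 < c →
        ((Matrix.of fun i j => (A i j).im : Matrix (Fin m) (Fin m) ℝ) - c • 1).PosSemidef →
        c ^ m ≤ ‖A.det‖ := by
  set B : Matrix (Fin m) (Fin m) ℝ := Matrix.of fun i j => (A i j).im with hBdef
  set R : Matrix (Fin m) (Fin m) ℝ := Matrix.of fun i j => (A i j).re with hRdef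
  have hRsymm : Rᵀ = R := by
    ext i j
    simp only [hRdef, transpose_apply, of_apply]
    exact congrArg Complex.re (congrFun (congrFun hsymm i) j)
  -- square root of B
  set L : Matrix (Fin m) (Fin m) ℝ := (open scoped MatrixOrder in CFC.sqrt B) with hLdef
  have hLL : L * L = B := by
    open scoped MatrixOrder in exact CFC.sqrt_mul_sqrt_self B hpd.posSemidef.nonneg
  have hLherm : L.IsHermitian := by
    open scoped MatrixOrder in exact (CFC.sqrt_nonneg B).posSemidef.1
  have hLsymm : Lᵀ = L := hLherm
  have hBdetpos : 0 < B.det := hpd.det_pos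
  have hLdet : IsUnit L.det := by
    have : L.det * L.det = B.det := by rw [← det_mul, hLL]
    refine isUnit_iff_ne_zero.2 fun h0 => ?_
    rw [h0, mul_zero] at this
    exact (lt_irrefl _ (this ▸ hBdetpos)).elim
  -- the complexification ring hom
  set φ : Matrix (Fin m) (Fin m) ℝ →+* Matrix (Fin m) (Fin m) ℂ :=
    Complex.ofRealHom.mapMatrix with hφdef
  have hφ_apply : ∀ (M : Matrix (Fin m) (Fin m) ℝ) i j, φ M i j = (M i j : ℂ) := by
    intro M i j; rfl
  have hφdet : ∀ (M : Matrix (Fin m) (Fin m) ℝ), (φ M).det = (M.det : ℂ) := by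
    intro M
    exact (RingHom.map_det Complex.ofRealHom M).symm
  -- S
  set S : Matrix (Fin m) (Fin m) ℝ := L⁻¹ * R * L⁻¹ with hSdef
  have hSsymm : Sᵀ = S := by
    rw [hSdef, transpose_mul, transpose_mul, transpose_nonsing_inv, hLsymm, hRsymm,
      Matrix.mul_assoc]
  have hLSL : L * S * L = R := by
    rw [hSdef]
    simp only [Matrix.mul_assoc]
    rw [Matrix.nonsing_inv_mul _ hLdet, Matrix.mul_one,
      Matrix.mul_nonsing_inv_cancel_left _ _ hLdet]
  clear hSdef hLdef
  clear_value S L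
  -- decomposition A = φL * (φS + I•1) * φL
  have hA : A = φ L * (φ S + Complex.I • 1) * φ L := by
    have expand : φ L * (φ S + Complex.I • 1) * φ L
        = φ (L * S * L) + Complex.I • φ (L * L) := by
      rw [mul_add, add_mul, mul_smul_comm, smul_mul_assoc, Matrix.mul_one, _root_.map_mul,
        _root_.map_mul, _root_.map_mul]
    rw [expand, hLSL, hLL]
    ext i j
    simp only [Matrix.add_apply, Matrix.smul_apply, hφ_apply, smul_eq_mul]
    rw [hRdef, hBdef]
    simp only [of_apply]
    rw [mul_comm]
    exact (Complex.re_add_im (A i j)).symm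
  -- the factor D
  set D : ℂ := (φ S + Complex.I • 1).det with hDdef
  have hdetA : A.det = (L.det : ℂ) * D * (L.det : ℂ) := by
    rw [hA, det_mul, det_mul, hφdet]
  -- conjugate of D
  have hconjD : (starRingEnd ℂ) D = (φ S - Complex.I • 1).det := by
    have h1 : (φ S + Complex.I • 1)ᴴ = φ S - Complex.I • 1 := by
      rw [conjTranspose_add, conjTranspose_smul, conjTranspose_one]
      have : (φ S)ᴴ = φ S := by
        ext i j
        simp only [conjTranspose_apply, hφ_apply, Complex.star_def, Complex.conj_ofReal]
        rw [show S j i = Sᵀ i j from rfl, hSsymm]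
      rw [this, Complex.star_def, Complex.conj_I, neg_smul, sub_eq_add_neg]
    rw [← h1, det_conjTranspose]
    rfl
  have hDD : ((Complex.normSq D : ℝ) : ℂ) = (((S * S + 1).det : ℝ) : ℂ) := by
    rw [← Complex.mul_conj D, hconjD, hDdef, ← det_mul]
    have key : ∀ X : Matrix (Fin m) (Fin m) ℂ,
        (X + Complex.I • 1) * (X - Complex.I • 1) = X * X + 1 := by
      intro X
      rw [mul_sub, add_mul, add_mul, mul_smul_comm, smul_mul_assoc, smul_mul_assoc,
        mul_smul_comm, Matrix.mul_one, Matrix.one_mul, smul_smul, Complex.I_mul_I,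
        neg_smul, one_smul]
      simp only [Matrix.one_mul]
      abel
    have expand : (φ S + Complex.I • 1) * (φ S - Complex.I • 1)
        = φ (S * S + 1) := by
      rw [key, map_add, _root_.map_mul, _root_.map_one]
    rw [expand, hφdet]
  have hSS : 1 ≤ (S * S + 1).det := by
    have hSherm : S.IsHermitian := hSsymm
    have hpsd : (S * S).PosSemidef := by
      have := posSemidef_conjTranspose_mul_self S
      rwa [show Sᴴ = S from hSherm] at this
    have h1 : (S * S + 1).IsHermitian := hpsd.1.add isHermitian_one
    have := aux_det_ge h1 (zero_le_one) (by simpa using hpsd)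
    simpa using this
  have hnormSq : Complex.normSq D = (S * S + 1).det := by
    exact_mod_cast hDD
  have hDabs : 1 ≤ ‖D‖ := by
    have h2 : ‖D‖ ^ 2 = (S * S + 1).det := by
      rw [Complex.sq_norm, hnormSq]
    nlinarith [norm_nonneg D, hSS]
  have habsA : ‖A.det‖ = B.det * ‖D‖ := by
    calc ‖A.det‖ = |L.det| * ‖D‖ * |L.det| := by
          rw [hdetA, norm_mul, norm_mul, Complex.norm_real, Real.norm_eq_abs]
      _ = L.det * L.det * ‖D‖ := by rw [mul_right_comm, abs_mul_abs_self]
      _ = B.det * ‖D‖ := by rw [← det_mul, hLL]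
  have part1 : B.det ≤ ‖A.det‖ := by
    rw [habsA]
    nlinarith [hBdetpos, hDabs]
  refine ⟨part1, fun c hc hcpsd => ?_⟩
  exact le_trans (aux_det_ge hpd.1 hc.le hcpsd) part1
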